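/- Let h > 0 be a real number, λ a nonzero real number, and f : ℝ → ℝ. Define y_p : ℝ → ℝ by y_p(t) = ∑_{s=1}^{⌊t/h⌋} λ^{s-1} f(t − s·h). Then for every real t ≥ 0, y_p(t+h) − λ·y_p(t) = f(t); that is, y_p is a particular solution of y(t+h) − λ y(t) = f(t) on [0,∞). -/

import Mathlib

/-- The function `y_p(t) = ∑_{s=1}^{⌊t/h⌋} λ^{s-1} f(t - s·h)` is a particular solution of
`y(t+h) - λ y(t) = f(t)` on `[0,∞)`. -/
theorem stmt_12 (h : ℝ) (hh : 0 < h) (lam : ℝ) (hlam : lam ≠ 0) (f : ℝ → ℝ)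
    (yp : ℝ → ℝ)
    (hyp : ∀ t : ℝ, yp t =
      ∑ s ∈ Finset.Icc (1 : ℤ) ⌊t / h⌋, lam ^ (s - 1) * f (t - (s : ℝ) * h)) :
    ∀ t : ℝ, 0 ≤ t → yp (t + h) - lam * yp t = f t := by
  intro t ht
  have hn : (0 : ℤ) ≤ ⌊t / h⌋ := Int.floor_nonneg.2 (div_nonneg ht hh.le)
  set n := ⌊t / h⌋ with hndef
  have hfloor : ⌊(t + h) / h⌋ = n + 1 := by
    rw [add_div, div_self hh.ne', hndef]
    exact_mod_cast Int.floor_add_intCast (t / h) 1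
  rw [hyp, hyp, hfloor]
  have hsplit : Finset.Icc (1 : ℤ) (n + 1) = insert 1 (Finset.Icc 2 (n + 1)) := by
    ext x
    simp only [Finset.mem_Icc, Finset.mem_insert]
    omega
  rw [hsplit, Finset.sum_insert (by simp)]
  have hmap : ∑ s ∈ Finset.Icc (2 : ℤ) (n + 1), lam ^ (s - 1) * f (t + h - (s : ℝ) * h)
      = ∑ s ∈ Finset.Icc (1 : ℤ) n, lam * (lam ^ (s - 1) * f (t - (s : ℝ) * h)) := by
    rw [show (2 : ℤ) = 1 + 1 by ring, show n + 1 = n + 1 by ring,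
      ← Finset.map_add_right_Icc, Finset.sum_map]
    refine Finset.sum_congr rfl fun s hs => ?_
    simp only [Finset.mem_Icc] at hs
    have h1 : (s + 1 : ℤ) - 1 = (s - 1) + 1 := by ring
    simp only [addRightEmbedding_apply, h1, zpow_add₀ hlam, zpow_one]
    push_cast
    ring_nf
  rw [hmap, ← Finset.mul_sum]
  simp [hndef]
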